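/- Let X = [0,2]_ℤ × [0,2]_ℤ with c₂-adjacency and let A = {(0,0),(0,2),(2,0),(2,2)}. Then (X,c₂) is not (A,1,1)-limited: the function f : X → X defined by f(x,y) = (x,y) if y > 0, f(0,0) = (0,1), f(2,0) = (2,1), f(1,0) = (1,2), is c₂-continuous with f|_A a 1-map, but f is not a 1-map. -/

import Mathlib

/-- A function between digital images (graphs) is digitally continuous if adjacent
points map to equal or adjacent points. -/
def DigContinuous {V W : Type*} (G : SimpleGraph V) (H : SimpleGraph W) (f : V → W) : Prop :=
  ∀ x y : V, G.Adj x y → f x = f y ∨ H.Adj (f x) (f y)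

/-- `f` restricted to `A` is an `m`-map: it moves each point of `A` a graph distance of at
most `m`. -/
def IsMMapOn {V : Type*} (G : SimpleGraph V) (f : V → V) (A : Set V) (m : ℕ) : Prop :=
  ∀ a ∈ A, G.dist a (f a) ≤ m

/-- `A` is an `(m,n)`-limiting set for `(X,κ)`: every continuous self-map whose restriction
to `A` is an `m`-map is an `n`-map. -/
def IsLimiting {V : Type*} (G : SimpleGraph V) (A : Set V) (m n : ℕ) : Prop :=
  ∀ f : V → V, DigContinuous G G f → IsMMapOn G f A m → IsMMapOn G f Set.univ n

/-- `A` is a minimal `(m,n)`-limiting set: it is limiting and no proper subset is. -/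
def IsMinimalLimiting {V : Type*} (G : SimpleGraph V) (A : Set V) (m n : ℕ) : Prop :=
  IsLimiting G A m n ∧ ∀ B : Set V, B ⊂ A → ¬ IsLimiting G B m n

/-- The digital square `[0,2]_ℤ × [0,2]_ℤ` with `c₂`-adjacency. -/
def sqC2 : SimpleGraph (Set.Icc (0 : ℤ) 2 ×ˢ Set.Icc (0 : ℤ) 2) where
  Adj p q := p ≠ q ∧ |(p : ℤ × ℤ).1 - (q : ℤ × ℤ).1| ≤ 1 ∧
    |(p : ℤ × ℤ).2 - (q : ℤ × ℤ).2| ≤ 1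
  symm := by
    constructor
    rintro p q ⟨h1, h2, h3⟩
    exact ⟨h1.symm, by rwa [abs_sub_comm], by rwa [abs_sub_comm]⟩
  loopless := by
    constructor
    rintro p ⟨hne, -⟩
    exact hne rfl

/-- The set of corners of `[0,2]_ℤ × [0,2]_ℤ`. -/
def cornerSet : Set (Set.Icc (0 : ℤ) 2 ×ˢ Set.Icc (0 : ℤ) 2) :=
  {p | (p : ℤ × ℤ) = (0, 0) ∨ (p : ℤ × ℤ) = (0, 2) ∨
       (p : ℤ × ℤ) = (2, 0) ∨ (p : ℤ × ℤ) = (2, 2)}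

/-- The map of Example `A(0,1)notA(1,1)`: identity on points with `y > 0`,
`(0,0) ↦ (0,1)`, `(2,0) ↦ (2,1)`, `(1,0) ↦ (1,2)`. -/
def f19 : (Set.Icc (0 : ℤ) 2 ×ˢ Set.Icc (0 : ℤ) 2) →
    (Set.Icc (0 : ℤ) 2 ×ˢ Set.Icc (0 : ℤ) 2) := fun p =>
  if (p : ℤ × ℤ).2 = 0 then
    (if (p : ℤ × ℤ).1 = 1 then ⟨(1, 2), by constructor <;> norm_num⟩
     else ⟨((p : ℤ × ℤ).1, 1), ⟨p.2.1, by norm_num⟩⟩)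
  else p


abbrev T19 := ↥(Set.Icc (0 : ℤ) 2 ×ˢ Set.Icc (0 : ℤ) 2)

lemma adj_iff19 (a b : T19) : sqC2.Adj a b ↔
    ¬((a : ℤ × ℤ).1 = (b : ℤ × ℤ).1 ∧ (a : ℤ × ℤ).2 = (b : ℤ × ℤ).2) ∧
    |(a : ℤ × ℤ).1 - (b : ℤ × ℤ).1| ≤ 1 ∧ |(a : ℤ × ℤ).2 - (b : ℤ × ℤ).2| ≤ 1 := by
  show (a ≠ b ∧ _) ↔ _
  rw [Ne, Subtype.ext_iff, Prod.ext_iff]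

lemma eq_iff19 (a b : T19) : a = b ↔
    (a : ℤ × ℤ).1 = (b : ℤ × ℤ).1 ∧ (a : ℤ × ℤ).2 = (b : ℤ × ℤ).2 := by
  rw [Subtype.ext_iff, Prod.ext_iff]

lemma cont19 : DigContinuous sqC2 sqC2 f19 := by
  intro p q hpq
  rw [adj_iff19, abs_le, abs_le] at hpq
  obtain ⟨⟨hp1, hp2⟩, hp3, hp4⟩ := p.2
  obtain ⟨⟨hq1, hq2⟩, hq3, hq4⟩ := q.2
  unfold f19
  split_ifs <;>
    simp only [adj_iff19, eq_iff19, abs_le, Subtype.coe_mk] <;> omega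

lemma corner19 : IsMMapOn sqC2 f19 cornerSet 1 := by
  rintro ⟨v, hv⟩ ha
  simp only [cornerSet, Set.mem_setOf_eq] at ha
  rcases ha with h | h | h | h <;> subst h <;>
    first
      | · have hid : f19 ⟨_, hv⟩ = ⟨_, hv⟩ := by simp [f19]
          rw [hid, SimpleGraph.dist_self]
          norm_num
      | · have hadj : sqC2.Adj ⟨_, hv⟩ (f19 ⟨_, hv⟩) := by
            rw [adj_iff19]
            norm_num [f19]
          exact (SimpleGraph.dist_eq_one_iff_adj.mpr hadj).le

lemma not1map19 : ¬ IsMMapOn sqC2 f19 Set.univ 1 := by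
  intro h
  have hx : ((1 : ℤ), (0 : ℤ)) ∈ Set.Icc (0:ℤ) 2 ×ˢ Set.Icc (0:ℤ) 2 := by
    constructor <;> norm_num
  set x : T19 := ⟨(1, 0), hx⟩ with hxdef
  have hfx : f19 x = ⟨(1, 2), by constructor <;> norm_num⟩ := rfl
  have hd := h x (Set.mem_univ x)
  rw [hfx] at hd
  have hr : sqC2.Reachable x ⟨(1, 2), by constructor <;> norm_num⟩ := by
    have a1 : sqC2.Adj x ⟨(1,1), by constructor <;> norm_num⟩ := by
      rw [adj_iff19]; norm_num
    have a2 : sqC2.Adj (⟨(1,1), by constructor <;> norm_num⟩ : T19)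
        ⟨(1,2), by constructor <;> norm_num⟩ := by
      rw [adj_iff19]; norm_num
    exact a1.reachable.trans a2.reachable
  have hpos := hr.pos_dist_of_ne (by intro he; rw [eq_iff19] at he; norm_num at he)
  have h1 : sqC2.dist x ⟨(1, 2), by constructor <;> norm_num⟩ = 1 := by omega
  rw [SimpleGraph.dist_eq_one_iff_adj, adj_iff19] at h1
  norm_num at h1

theorem stmt19 :
    ¬ IsLimiting sqC2 cornerSet 1 1 ∧
    DigContinuous sqC2 sqC2 f19 ∧
    IsMMapOn sqC2 f19 cornerSet 1 ∧
    ¬ IsMMapOn sqC2 f19 Set.univ 1 := by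
  refine ⟨?_, cont19, corner19, not1map19⟩
  intro h
  exact not1map19 (h f19 cont19 corner19)
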